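/- Let W be a d×d matrix A₂ weight on ℝ, let σ = {σ_I}_{I∈𝒟} be a sequence of d×d complex matrices, and let T_σ f = ∑_{I∈𝒟} σ_I f̂(I) h_I. Suppose there is a constant C₀ such that ‖T_σ f‖_{L²(W)} ≤ C₀ ‖f‖_{L²(W)} for all f ∈ L²(W) ∩ L²(ℝ, ℂ^d). Then for every I ∈ 𝒟 and every e ∈ ℂ^d, ⟨⟨W⟩_I^{-1/2} σ_I^* ⟨W⟩_I σ_I ⟨W⟩_I^{-1/2} e, e⟩_{ℂ^d} ≤ C₀² ‖e‖²_{ℂ^d}; equivalently, ‖⟨W⟩_I^{1/2} σ_I ⟨W⟩_I^{-1/2}‖ ≤ C₀ for every I ∈ 𝒟. -/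

import Mathlib

open MeasureTheory Matrix Filter
open scoped ENNReal ComplexOrder

noncomputable section

abbrev Vec (d : ℕ) := Fin d → ℂ
abbrev Mat (d : ℕ) := Matrix (Fin d) (Fin d) ℂ

/-- The standard dyadic interval `[2^{-k} n, 2^{-k}(n+1))`. -/
def dyadI (k n : ℤ) : Set ℝ := Set.Ico ((2:ℝ) ^ (-k) * n) ((2:ℝ) ^ (-k) * (n + 1))

/-- The Haar function of the dyadic interval indexed by `(k, n)`. -/
def haar (k n : ℤ) (x : ℝ) : ℝ :=
  Real.sqrt ((2:ℝ) ^ k) *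
    ((dyadI (k+1) (2*n+1)).indicator (fun _ => (1:ℝ)) x -
      (dyadI (k+1) (2*n)).indicator (fun _ => (1:ℝ)) x)

/-- The non-cancellative Haar function `h_I^1 = 1_I / |I|`. -/
def hone (k n : ℤ) (x : ℝ) : ℝ := (dyadI k n).indicator (fun _ => (2:ℝ) ^ k) x

/-- Haar coefficient `f̂(I) = ∫ f · h_I`. -/
def fhat {d : ℕ} (f : ℝ → Vec d) (k n : ℤ) : Vec d :=
  ∫ x in dyadI k n, ((haar k n x : ℝ) : ℂ) • f x

/-- Average of a vector-valued function over a dyadic interval. -/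
def vavg {d : ℕ} (g : ℝ → Vec d) (k n : ℤ) : Vec d :=
  (2:ℝ) ^ k • ∫ x in dyadI k n, g x

/-- Average `⟨W⟩_I` of a matrix-valued function over a dyadic interval. -/
def avgD {d : ℕ} (W : ℝ → Mat d) (k n : ℤ) : Mat d :=
  Matrix.of fun i j => (2:ℝ) ^ k • ∫ x in dyadI k n, W x i j

/-- Average `⟨W⟩_{[a,b)}` of a matrix-valued function over an interval. -/
def avgI {d : ℕ} (W : ℝ → Mat d) (a b : ℝ) : Mat d :=
  Matrix.of fun i j => (b - a)⁻¹ • ∫ x in Set.Ico a b, W x i j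

/-- Inner product on `ℂ^d`, linear in the first entry. -/
def ip {d : ℕ} (u v : Vec d) : ℂ := ∑ i, u i * (starRingEnd ℂ) (v i)

/-- Squared Euclidean norm on `ℂ^d`. -/
def vnSq {d : ℕ} (u : Vec d) : ℝ := ∑ i, ‖u i‖ ^ 2

/-- Quadratic form `⟨A u, u⟩`. -/
def qf {d : ℕ} (A : Mat d) (u : Vec d) : ℝ := (ip (A.mulVec u) u).re

/-- Operator norm of a matrix acting on `ℂ^d`. -/
def mOpNorm {d : ℕ} (A : Mat d) : ℝ := ‖Matrix.toEuclideanCLM (𝕜 := ℂ) A‖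

/-- The positive semidefinite square root (junk value `0` if not psd). -/
def msqrt {d : ℕ} (A : Mat d) : Mat d :=
  @dite _ A.PosSemidef (Classical.dec _) (fun h => (h.1.eigenvectorUnitary : Mat d) *
    diagonal ((↑) ∘ (h.1.eigenvalues · |>.sqrt)) * (star h.1.eigenvectorUnitary : Mat d)) (fun _ => 0)

/-- `‖f‖²_{L²(W)}`, valued in `[0,∞]`. -/
def wNormSq {d : ℕ} (W : ℝ → Mat d) (f : ℝ → Vec d) : ℝ≥0∞ :=
  ∫⁻ x, ENNReal.ofReal (qf (W x) (f x))

/-- `‖f‖²_{L²(ℝ,ℂ^d)}`, valued in `[0,∞]`. -/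
def l2NormSq {d : ℕ} (f : ℝ → Vec d) : ℝ≥0∞ :=
  ∫⁻ x, ENNReal.ofReal (vnSq (f x))

/-- The weighted square function sum `∑_{I ∈ 𝒟} ⟨⟨W⟩_I f̂(I), f̂(I)⟩`. -/
def sqSum {d : ℕ} (W : ℝ → Mat d) (f : ℝ → Vec d) : ℝ≥0∞ :=
  ∑' p : ℤ × ℤ, ENNReal.ofReal (qf (avgD W p.1 p.2) (fhat f p.1 p.2))

/-- `W` is a matrix weight: locally integrable entries, a.e. positive semidefinite values. -/
def IsMatrixWeight {d : ℕ} (W : ℝ → Mat d) : Prop :=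
  (∀ i j, LocallyIntegrable (fun x => W x i j) volume) ∧
  (∀ᵐ x ∂volume, (W x).PosSemidef)

/-- `K` bounds the `A₂` characteristic `sup_I ‖⟨W⟩_I^{1/2} ⟨W^{-1}⟩_I^{1/2}‖²` of `W`. -/
def A2Bound {d : ℕ} (W : ℝ → Mat d) (K : ℝ) : Prop :=
  ∀ a b : ℝ, a < b →
    mOpNorm (msqrt (avgI W a b) * msqrt (avgI (fun x => (W x)⁻¹) a b)) ^ 2 ≤ K

/-- `W` is a matrix `A₂` weight with `A₂` characteristic at most `K` (and `1 ≤ K`,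
as the characteristic is always at least `1`).  The positive definiteness of the
averages of `W` and `W⁻¹` is recorded as well. -/
def IsA2Weight {d : ℕ} (W : ℝ → Mat d) (K : ℝ) : Prop :=
  IsMatrixWeight W ∧ (∀ᵐ x ∂volume, IsUnit (W x).det) ∧
  IsMatrixWeight (fun x => (W x)⁻¹) ∧ 1 ≤ K ∧ A2Bound W K ∧
  (∀ a b : ℝ, a < b → (avgI W a b).PosDef) ∧
  (∀ a b : ℝ, a < b → (avgI (fun x => (W x)⁻¹) a b).PosDef) ∧
  (∀ k n : ℤ, (avgD W k n).PosDef) ∧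
  (∀ k n : ℤ, (avgD (fun x => (W x)⁻¹) k n).PosDef)

section DyadicLemmas

lemma two_zpow_pos (k : ℤ) : (0:ℝ) < 2 ^ k := zpow_pos (by norm_num) k

lemma dyadI_lt (k n : ℤ) : (2:ℝ) ^ (-k) * n < (2:ℝ) ^ (-k) * (n + 1) := by
  have := two_zpow_pos (-k); nlinarith

lemma measurableSet_dyadI (k n : ℤ) : MeasurableSet (dyadI k n) := measurableSet_Ico

lemma volume_dyadI (k n : ℤ) : volume (dyadI k n) = ENNReal.ofReal ((2:ℝ) ^ (-k)) := by
  rw [dyadI, Real.volume_Ico]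
  congr 1; ring

lemma zpow_neg_succ (k : ℤ) : (2:ℝ) ^ (-(k+1)) = 2 ^ (-k) / 2 := by
  rw [show -(k+1) = -k + (-1) by ring, zpow_add₀ (by norm_num : (2:ℝ) ≠ 0)]
  ring

lemma dyadI_left_subset (k n : ℤ) : dyadI (k+1) (2*n) ⊆ dyadI k n := by
  have hp := two_zpow_pos (-k)
  rw [dyadI, dyadI, zpow_neg_succ]
  apply Set.Ico_subset_Ico <;> push_cast <;> linarith

lemma dyadI_right_subset (k n : ℤ) : dyadI (k+1) (2*n+1) ⊆ dyadI k n := by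
  have hp := two_zpow_pos (-k)
  rw [dyadI, dyadI, zpow_neg_succ]
  apply Set.Ico_subset_Ico <;> push_cast <;> linarith

lemma dyadI_disjoint_of_ne {k n n' : ℤ} (h : n ≠ n') :
    Disjoint (dyadI k n) (dyadI k n') := by
  have hp := two_zpow_pos (-k)
  rcases h.lt_or_gt with hlt | hlt
  · rw [dyadI, dyadI, Set.Ico_disjoint_Ico]
    have h1 : (n:ℝ) + 1 ≤ n' := by exact_mod_cast hlt
    refine le_trans (min_le_left _ _) (le_trans ?_ (le_max_right _ _))
    nlinarith
  · rw [dyadI, dyadI, Set.Ico_disjoint_Ico]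
    have h1 : (n':ℝ) + 1 ≤ n := by exact_mod_cast hlt
    refine le_trans (min_le_right _ _) (le_trans ?_ (le_max_left _ _))
    nlinarith

lemma dyadI_union (k n : ℤ) :
    dyadI (k+1) (2*n) ∪ dyadI (k+1) (2*n+1) = dyadI k n := by
  have hp := two_zpow_pos (-k)
  rw [dyadI, dyadI, dyadI, zpow_neg_succ]
  have e1 : (2:ℝ) ^ (-k) / 2 * ((2*n : ℤ) : ℝ) = 2 ^ (-k) * n := by push_cast; ring
  have e2 : (2:ℝ) ^ (-k) / 2 * (((2*n : ℤ) : ℝ) + 1) = 2 ^ (-k) / 2 * ((2*n+1 : ℤ):ℝ) := by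
    push_cast; ring
  have e3 : (2:ℝ) ^ (-k) / 2 * (((2*n+1 : ℤ) : ℝ) + 1) = 2 ^ (-k) * (n + 1) := by
    push_cast; ring
  rw [e1, e2, e3]
  apply Set.Ico_union_Ico_eq_Ico <;> push_cast <;> linarith

lemma dyadI_succ_subset (k n : ℤ) : dyadI (k+1) n ⊆ dyadI k (n / 2) := by
  rcases Int.even_or_odd n with ⟨m, hm⟩ | ⟨m, hm⟩
  · have h2 : n / 2 = m := by omega
    rw [h2, show n = 2 * m by omega]
    exact dyadI_left_subset k m
  · have h2 : n / 2 = m := by omega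
    rw [h2, show n = 2 * m + 1 by omega]
    exact dyadI_right_subset k m

lemma dyadI_subset_or_disjoint (j : ℕ) :
    ∀ k n n' : ℤ, dyadI (k + j) n' ⊆ dyadI k n ∨ Disjoint (dyadI (k + j) n') (dyadI k n) := by
  induction j with
  | zero =>
    intro k n n'
    rcases eq_or_ne n' n with rfl | h
    · left; simp
    · right; simpa using dyadI_disjoint_of_ne h
  | succ j ih =>
    intro k n n'
    have step : dyadI (k + (j+1 : ℕ)) n' ⊆ dyadI (k + j) (n' / 2) := by
      have h3 : (k : ℤ) + ((j:ℕ)+1 : ℕ) = (k + j) + 1 := by push_cast; ring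
      rw [h3]
      exact dyadI_succ_subset _ _
    rcases ih k n (n' / 2) with hsub | hdis
    · left; exact step.trans hsub
    · right; exact Disjoint.mono_left step hdis

lemma dyadI_subset_or_disjoint' {k k' : ℤ} (h : k ≤ k') (n n' : ℤ) :
    dyadI k' n' ⊆ dyadI k n ∨ Disjoint (dyadI k' n') (dyadI k n) := by
  obtain ⟨j, rfl⟩ : ∃ j : ℕ, k' = k + j := ⟨(k' - k).toNat, by omega⟩
  exact dyadI_subset_or_disjoint j k n n'

end DyadicLemmas
section HaarLemmas

lemma haar_support {k n : ℤ} {x : ℝ} (hx : x ∉ dyadI k n) : haar k n x = 0 := by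
  have h1 : x ∉ dyadI (k+1) (2*n+1) := fun h => hx (dyadI_right_subset k n h)
  have h2 : x ∉ dyadI (k+1) (2*n) := fun h => hx (dyadI_left_subset k n h)
  simp [haar, Set.indicator_of_notMem h1, Set.indicator_of_notMem h2]

lemma haar_sq (k n : ℤ) (x : ℝ) :
    haar k n x ^ 2 = (2:ℝ) ^ k *
      ((dyadI (k+1) (2*n+1)).indicator (fun _ => (1:ℝ)) x +
       (dyadI (k+1) (2*n)).indicator (fun _ => (1:ℝ)) x) := by
  have hd : Disjoint (dyadI (k+1) (2*n)) (dyadI (k+1) (2*n+1)) :=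
    dyadI_disjoint_of_ne (by omega)
  have hs : Real.sqrt ((2:ℝ)^k) ^ 2 = 2 ^ k := Real.sq_sqrt (two_zpow_pos k).le
  rw [haar]
  by_cases h1 : x ∈ dyadI (k+1) (2*n+1)
  · have h2 : x ∉ dyadI (k+1) (2*n) := fun h => (hd.ne_of_mem h h1) rfl
    simp [Set.indicator_of_mem h1, Set.indicator_of_notMem h2, mul_pow, hs]
  · by_cases h2 : x ∈ dyadI (k+1) (2*n)
    · simp [Set.indicator_of_mem h2, Set.indicator_of_notMem h1, mul_pow, hs]
    · simp [Set.indicator_of_notMem h1, Set.indicator_of_notMem h2]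

lemma haar_sq_eq_hone (k n : ℤ) (x : ℝ) : haar k n x ^ 2 = hone k n x := by
  rw [haar_sq, hone]
  by_cases h1 : x ∈ dyadI (k+1) (2*n+1)
  · have hx : x ∈ dyadI k n := dyadI_right_subset k n h1
    have h2 : x ∉ dyadI (k+1) (2*n) := fun h =>
      ((dyadI_disjoint_of_ne (show (2*n : ℤ) ≠ 2*n+1 by omega)).ne_of_mem h h1) rfl
    simp [Set.indicator_of_mem h1, Set.indicator_of_notMem h2, Set.indicator_of_mem hx]
  · by_cases h2 : x ∈ dyadI (k+1) (2*n)
    · have hx : x ∈ dyadI k n := dyadI_left_subset k n h2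
      simp [Set.indicator_of_mem h2, Set.indicator_of_notMem h1, Set.indicator_of_mem hx]
    · have hx : x ∉ dyadI k n := by
        intro hx
        rw [← dyadI_union k n] at hx
        rcases hx with h | h
        · exact h2 h
        · exact h1 h
      simp [Set.indicator_of_notMem h1, Set.indicator_of_notMem h2,
        Set.indicator_of_notMem hx]

lemma measurable_haar (k n : ℤ) : Measurable (haar k n) := by
  apply Measurable.const_mul
  exact ((measurable_const.indicator (measurableSet_dyadI _ _)).sub
    (measurable_const.indicator (measurableSet_dyadI _ _)))

lemma integrable_indicator_one (k n : ℤ) :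
    Integrable ((dyadI k n).indicator (fun _ => (1:ℝ))) volume := by
  refine (IntegrableOn.integrable_indicator ?_ (measurableSet_dyadI k n))
  exact integrableOn_const (by rw [volume_dyadI]; exact ENNReal.ofReal_ne_top)

lemma integral_indicator_one (k n : ℤ) :
    ∫ x, (dyadI k n).indicator (fun _ => (1:ℝ)) x = (2:ℝ) ^ (-k) := by
  rw [MeasureTheory.integral_indicator_const (1:ℝ) (measurableSet_dyadI k n),
    measureReal_def, volume_dyadI, smul_eq_mul, mul_one, ENNReal.toReal_ofReal (two_zpow_pos (-k)).le]

lemma integrable_haar (k n : ℤ) : Integrable (haar k n) volume := by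
  apply Integrable.const_mul
  exact (integrable_indicator_one _ _).sub (integrable_indicator_one _ _)

lemma integral_haar (k n : ℤ) : ∫ x, haar k n x = 0 := by
  rw [show haar k n = fun x => Real.sqrt ((2:ℝ)^k) *
      ((dyadI (k+1) (2*n+1)).indicator (fun _ => (1:ℝ)) x -
       (dyadI (k+1) (2*n)).indicator (fun _ => (1:ℝ)) x) from rfl]
  rw [MeasureTheory.integral_const_mul]
  rw [MeasureTheory.integral_sub (integrable_indicator_one _ _) (integrable_indicator_one _ _)]
  rw [_root_.integral_indicator_one, _root_.integral_indicator_one]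
  simp

lemma integral_haar_sq (k n : ℤ) : ∫ x, haar k n x ^ 2 = 1 := by
  have : (fun x => haar k n x ^ 2) = fun x => (2:ℝ) ^ k *
      ((dyadI (k+1) (2*n+1)).indicator (fun _ => (1:ℝ)) x +
       (dyadI (k+1) (2*n)).indicator (fun _ => (1:ℝ)) x) := by
    funext x; exact haar_sq k n x
  rw [this, MeasureTheory.integral_const_mul,
    MeasureTheory.integral_add (integrable_indicator_one _ _) (integrable_indicator_one _ _),
    _root_.integral_indicator_one, _root_.integral_indicator_one, zpow_neg_succ]
  have hp := two_zpow_pos (-k)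
  have hq := two_zpow_pos k
  have : (2:ℝ) ^ k * 2 ^ (-k) = 1 := by
    rw [← zpow_add₀ (by norm_num : (2:ℝ) ≠ 0)]; simp
  nlinarith

end HaarLemmas
section Orthogonality

lemma haar_on_left {k n : ℤ} {x : ℝ} (hx : x ∈ dyadI (k+1) (2*n)) :
    haar k n x = -Real.sqrt ((2:ℝ)^k) := by
  have h1 : x ∉ dyadI (k+1) (2*n+1) := fun h =>
    ((dyadI_disjoint_of_ne (show (2*n : ℤ) ≠ 2*n+1 by omega)).ne_of_mem hx h) rfl
  simp [haar, Set.indicator_of_mem hx, Set.indicator_of_notMem h1]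

lemma haar_on_right {k n : ℤ} {x : ℝ} (hx : x ∈ dyadI (k+1) (2*n+1)) :
    haar k n x = Real.sqrt ((2:ℝ)^k) := by
  have h1 : x ∉ dyadI (k+1) (2*n) := fun h =>
    ((dyadI_disjoint_of_ne (show (2*n : ℤ) ≠ 2*n+1 by omega)).ne_of_mem h hx) rfl
  simp [haar, Set.indicator_of_mem hx, Set.indicator_of_notMem h1]

lemma integral_haar_mul_aux {k k' : ℤ} (n n' : ℤ) (hkk : k < k') :
    ∫ x, haar k n x * haar k' n' x = 0 := by
  have hk1 : k + 1 ≤ k' := by omega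
  rcases dyadI_subset_or_disjoint' hk1 (2*n) n' with hsub | hdis0
  · have hpt : ∀ x, haar k n x * haar k' n' x = -Real.sqrt ((2:ℝ)^k) * haar k' n' x := by
      intro x
      by_cases hx : x ∈ dyadI k' n'
      · rw [haar_on_left (hsub hx)]
      · rw [haar_support hx, mul_zero, mul_zero]
    simp_rw [hpt]
    rw [MeasureTheory.integral_const_mul, integral_haar, mul_zero]
  · rcases dyadI_subset_or_disjoint' hk1 (2*n+1) n' with hsub | hdis1
    · have hpt : ∀ x, haar k n x * haar k' n' x = Real.sqrt ((2:ℝ)^k) * haar k' n' x := by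
        intro x
        by_cases hx : x ∈ dyadI k' n'
        · rw [haar_on_right (hsub hx)]
        · rw [haar_support hx, mul_zero, mul_zero]
      simp_rw [hpt]
      rw [MeasureTheory.integral_const_mul, integral_haar, mul_zero]
    · have hpt : ∀ x, haar k n x * haar k' n' x = 0 := by
        intro x
        by_cases hx : x ∈ dyadI k' n'
        · have h0 : x ∉ dyadI (k+1) (2*n) := fun h => (hdis0.ne_of_mem hx h) rfl
          have h1 : x ∉ dyadI (k+1) (2*n+1) := fun h => (hdis1.ne_of_mem hx h) rfl
          simp [haar, Set.indicator_of_notMem h0, Set.indicator_of_notMem h1]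
        · rw [haar_support hx, mul_zero]
      simp_rw [hpt]
      exact integral_zero _ _

lemma integral_haar_mul (k n k' n' : ℤ) :
    ∫ x, haar k n x * haar k' n' x = if k = k' ∧ n = n' then 1 else 0 := by
  rcases eq_or_ne (k, n) (k', n') with heq | hne
  · obtain ⟨rfl, rfl⟩ := Prod.mk.inj heq
    simp only [if_pos (And.intro rfl rfl)]
    simp_rw [← sq]
    exact integral_haar_sq k n
  · rw [if_neg (by intro ⟨h1, h2⟩; exact hne (by rw [h1, h2]))]
    rcases lt_trichotomy k k' with hlt | heq | hgt
    · exact integral_haar_mul_aux n n' hlt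
    · subst heq
      have hnn : n ≠ n' := fun h => hne (by rw [h])
      have hpt : ∀ x, haar k n x * haar k n' x = 0 := by
        intro x
        by_cases hx : x ∈ dyadI k n
        · have : x ∉ dyadI k n' := fun h => ((dyadI_disjoint_of_ne hnn).ne_of_mem hx h) rfl
          rw [haar_support this, mul_zero]
        · rw [haar_support hx, zero_mul]
      simp_rw [hpt]
      exact integral_zero _ _
    · simp_rw [mul_comm (haar k n _)]
      exact integral_haar_mul_aux n' n hgt

end Orthogonality
section FhatLemmas

lemma fhat_haar_smul {d : ℕ} (k n k' n' : ℤ) (v : Vec d) :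
    fhat (fun x => ((haar k n x : ℝ) : ℂ) • v) k' n' =
      if k' = k ∧ n' = n then v else 0 := by
  rw [fhat]
  have hpt : ∀ x, ((haar k' n' x : ℝ) : ℂ) • (((haar k n x : ℝ) : ℂ) • v) =
      (((haar k' n' x * haar k n x : ℝ) : ℂ)) • v := by
    intro x; rw [smul_smul, ← Complex.ofReal_mul]
  simp_rw [hpt]
  rw [MeasureTheory.setIntegral_eq_integral_of_forall_compl_eq_zero
    (fun x hx => by rw [haar_support hx]; simp)]
  rw [integral_smul_const,
    show (∫ (x:ℝ), ((haar k' n' x * haar k n x : ℝ) : ℂ)) =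
      ((∫ x, haar k' n' x * haar k n x : ℝ) : ℂ) from integral_ofReal,
    integral_haar_mul k' n' k n]
  by_cases h : k' = k ∧ n' = n
  · rw [if_pos h, if_pos h]; simp
  · rw [if_neg h, if_neg h]; simp

end FhatLemmas
section IpLemmas

variable {d : ℕ}

lemma ip_mulVec (M : Mat d) (u w : Vec d) : ip (M.mulVec u) w = ip u (Mᴴ.mulVec w) := by
  simp only [ip, Matrix.mulVec, dotProduct, Matrix.conjTranspose_apply,
    Finset.sum_mul, Finset.mul_sum, map_sum]
  rw [Finset.sum_comm]
  refine Finset.sum_congr rfl fun i _ => Finset.sum_congr rfl fun j _ => ?_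
  simp only [starRingEnd_apply, star_mul', star_star]
  ring

lemma ip_smul_left (c : ℂ) (u w : Vec d) : ip (c • u) w = c * ip u w := by
  simp only [ip, Pi.smul_apply, smul_eq_mul, Finset.mul_sum]
  exact Finset.sum_congr rfl fun i _ => by ring

lemma ip_smul_right (c : ℂ) (u w : Vec d) : ip u (c • w) = (starRingEnd ℂ) c * ip u w := by
  simp only [ip, Pi.smul_apply, smul_eq_mul, _root_.map_mul, Finset.mul_sum]
  exact Finset.sum_congr rfl fun i _ => by ring

lemma ip_self_re (u : Vec d) : (ip u u).re = vnSq u := by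
  rw [ip, vnSq, Complex.re_sum]
  refine Finset.sum_congr rfl fun i _ => ?_
  rw [Complex.mul_conj, Complex.ofReal_re, Complex.normSq_eq_norm_sq]

lemma qf_nonneg {M : Mat d} (h : M.PosSemidef) (v : Vec d) : 0 ≤ qf M v := by
  have h2 := h.dotProduct_mulVec_nonneg v
  have heq : star v ⬝ᵥ (M *ᵥ v) = ip (M.mulVec v) v := by
    simp only [ip, dotProduct, Pi.star_apply, RCLike.star_def]
    refine Finset.sum_congr rfl fun i _ => by rw [starRingEnd_apply]; ring
  rw [heq] at h2
  rw [qf]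
  exact (Complex.le_def.mp h2).1

lemma qf_smul_real (A : Mat d) (r : ℝ) (u : Vec d) :
    qf A (((r : ℝ) : ℂ) • u) = r ^ 2 * qf A u := by
  rw [qf, qf, Matrix.mulVec_smul, ip_smul_left, ip_smul_right]
  rw [Complex.conj_ofReal, ← mul_assoc, ← Complex.ofReal_mul, ← sq]
  rw [show ((r^2 : ℝ) : ℂ) * ip (A.mulVec u) u = (r^2 : ℝ) • ip (A.mulVec u) u by
    rw [Complex.real_smul]]
  rw [Complex.smul_re, smul_eq_mul]

lemma qf_conj_mul (B A : Mat d) (u : Vec d) :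
    qf (Bᴴ * A * B) u = qf A (B.mulVec u) := by
  rw [qf, qf, ← Matrix.mulVec_mulVec, ← Matrix.mulVec_mulVec, ip_mulVec,
    Matrix.conjTranspose_conjTranspose]

lemma qf_conjTranspose_mul_self (B : Mat d) (u : Vec d) :
    qf (Bᴴ * B) u = vnSq (B.mulVec u) := by
  rw [qf, ← Matrix.mulVec_mulVec, ip_mulVec, Matrix.conjTranspose_conjTranspose, ip_self_re]

end IpLemmas
section AvgLemmas

variable {d : ℕ} {W : ℝ → Mat d}

lemma integrableOn_entry (hW : IsMatrixWeight W) (i j : Fin d) (k n : ℤ) :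
    IntegrableOn (fun x => W x i j) (dyadI k n) volume := by
  exact ((hW.1 i j).integrableOn_isCompact isCompact_Icc).mono_set Set.Ico_subset_Icc_self

lemma ip_mulVec_expand (A : Mat d) (u : Vec d) :
    ip (A.mulVec u) u = ∑ i, ∑ j, A i j * (u j * (starRingEnd ℂ) (u i)) := by
  simp only [ip, Matrix.mulVec, dotProduct, Finset.sum_mul]
  exact Finset.sum_congr rfl fun i _ => Finset.sum_congr rfl fun j _ => by ring

lemma integrableOn_ip (hW : IsMatrixWeight W) (u : Vec d) (k n : ℤ) :
    IntegrableOn (fun x => ip ((W x).mulVec u) u) (dyadI k n) volume := by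
  have : (fun x => ip ((W x).mulVec u) u) =
      fun x => ∑ i, ∑ j, W x i j * (u j * (starRingEnd ℂ) (u i)) := by
    funext x; exact ip_mulVec_expand (W x) u
  rw [this]
  apply MeasureTheory.integrable_finset_sum
  intro i _
  apply MeasureTheory.integrable_finset_sum
  intro j _
  exact (integrableOn_entry hW i j k n).mul_const _

lemma integrableOn_qf (hW : IsMatrixWeight W) (u : Vec d) (k n : ℤ) :
    IntegrableOn (fun x => qf (W x) u) (dyadI k n) volume := by
  have h := (integrableOn_ip hW u k n).re
  simpa [qf, RCLike.re_to_complex, IntegrableOn] using h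

lemma qf_avgD (hW : IsMatrixWeight W) (k n : ℤ) (u : Vec d) :
    qf (avgD W k n) u = (2:ℝ) ^ k * ∫ x in dyadI k n, qf (W x) u := by
  have hcpx : ip ((avgD W k n).mulVec u) u =
      (((2:ℝ)^k : ℝ) : ℂ) * ∫ x in dyadI k n, ip ((W x).mulVec u) u := by
    rw [ip_mulVec_expand]
    have hentry : ∀ i j : Fin d, (avgD W k n) i j =
        (((2:ℝ)^k : ℝ) : ℂ) * ∫ x in dyadI k n, W x i j := by
      intro i j
      simp [avgD, Complex.real_smul]
    calc ∑ i, ∑ j, (avgD W k n) i j * (u j * (starRingEnd ℂ) (u i))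
        = ∑ i, ∑ j, (((2:ℝ)^k : ℝ) : ℂ) *
            ((∫ x in dyadI k n, W x i j) * (u j * (starRingEnd ℂ) (u i))) := by
          refine Finset.sum_congr rfl fun i _ => Finset.sum_congr rfl fun j _ => ?_
          rw [hentry i j]; ring
      _ = (((2:ℝ)^k : ℝ) : ℂ) * ∑ i, ∑ j,
            ((∫ x in dyadI k n, W x i j) * (u j * (starRingEnd ℂ) (u i))) := by
          rw [Finset.mul_sum]
          refine Finset.sum_congr rfl fun i _ => by rw [Finset.mul_sum]
      _ = (((2:ℝ)^k : ℝ) : ℂ) * ∑ i, ∑ j,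
            ∫ x in dyadI k n, W x i j * (u j * (starRingEnd ℂ) (u i)) := by
          congr 1
          refine Finset.sum_congr rfl fun i _ => Finset.sum_congr rfl fun j _ => ?_
          rw [MeasureTheory.integral_mul_const]
      _ = (((2:ℝ)^k : ℝ) : ℂ) * ∫ x in dyadI k n,
            ∑ i, ∑ j, W x i j * (u j * (starRingEnd ℂ) (u i)) := by
          congr 1
          rw [MeasureTheory.integral_finset_sum]
          · refine Finset.sum_congr rfl fun i _ => ?_
            rw [MeasureTheory.integral_finset_sum]
            intro j _
            exact (integrableOn_entry hW i j k n).mul_const _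
          · intro i _
            apply MeasureTheory.integrable_finset_sum
            intro j _
            exact (integrableOn_entry hW i j k n).mul_const _
      _ = (((2:ℝ)^k : ℝ) : ℂ) * ∫ x in dyadI k n, ip ((W x).mulVec u) u := by
          congr 1
          refine MeasureTheory.integral_congr_ae (.of_forall fun x => ?_)
          exact (ip_mulVec_expand (W x) u).symm
  rw [qf, hcpx, Complex.re_ofReal_mul]
  congr 1
  have h := integral_re (integrableOn_ip hW u k n)
  simp only [RCLike.re_to_complex] at h
  rw [← h]
  refine MeasureTheory.integral_congr_ae (.of_forall fun x => ?_)
  rfl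

lemma wNormSq_haar_smul (hW : IsMatrixWeight W) (hWpsd : ∀ᵐ x ∂volume, (W x).PosSemidef)
    (k n : ℤ) (u : Vec d) :
    wNormSq W (fun x => ((haar k n x : ℝ) : ℂ) • u) =
      ENNReal.ofReal (qf (avgD W k n) u) := by
  rw [wNormSq]
  have hpt : ∀ x, ENNReal.ofReal (qf (W x) (((haar k n x : ℝ) : ℂ) • u)) =
      (dyadI k n).indicator (fun x => ENNReal.ofReal ((2:ℝ)^k * qf (W x) u)) x := by
    intro x
    rw [qf_smul_real, haar_sq_eq_hone, hone]
    by_cases hx : x ∈ dyadI k n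
    · rw [Set.indicator_of_mem hx, Set.indicator_of_mem hx]
    · rw [Set.indicator_of_notMem hx, Set.indicator_of_notMem hx, zero_mul]
      exact ENNReal.ofReal_zero
  simp_rw [hpt]
  rw [MeasureTheory.lintegral_indicator (measurableSet_dyadI k n) _]
  have hInt : Integrable (fun x => (2:ℝ)^k * qf (W x) u)
      (volume.restrict (dyadI k n)) := (integrableOn_qf hW u k n).const_mul _
  have hnn : 0 ≤ᵐ[volume.restrict (dyadI k n)] fun x => (2:ℝ)^k * qf (W x) u := by
    refine MeasureTheory.ae_restrict_of_ae ?_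
    filter_upwards [hWpsd] with x hx
    exact mul_nonneg (two_zpow_pos k).le (qf_nonneg hx u)
  rw [← MeasureTheory.ofReal_integral_eq_lintegral_ofReal hInt hnn]
  rw [MeasureTheory.integral_const_mul, ← qf_avgD hW]

end AvgLemmas
section TestFunctions

variable {d : ℕ}

lemma measurable_haar_smul (k n : ℤ) (u : Vec d) :
    Measurable (fun x => ((haar k n x : ℝ) : ℂ) • u) := by
  rw [measurable_pi_iff]
  intro i
  simp only [Pi.smul_apply, smul_eq_mul]
  exact (Complex.measurable_ofReal.comp (measurable_haar k n)).mul_const _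

lemma memLp_haar_smul (k n : ℤ) (u : Vec d) :
    MemLp (fun x => ((haar k n x : ℝ) : ℂ) • u) 2 volume := by
  have hd : Disjoint (dyadI (k+1) (2*n)) (dyadI (k+1) (2*n+1)) :=
    dyadI_disjoint_of_ne (by omega)
  have heq : (fun x => ((haar k n x : ℝ) : ℂ) • u) =
      (fun x => (dyadI (k+1) (2*n+1)).indicator
          (fun _ => ((Real.sqrt ((2:ℝ)^k) : ℝ) : ℂ) • u) x -
        (dyadI (k+1) (2*n)).indicator
          (fun _ => ((Real.sqrt ((2:ℝ)^k) : ℝ) : ℂ) • u) x) := by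
    funext x
    by_cases h1 : x ∈ dyadI (k+1) (2*n+1)
    · have h2 : x ∉ dyadI (k+1) (2*n) := fun h => (hd.ne_of_mem h h1) rfl
      rw [haar_on_right h1, Set.indicator_of_mem h1, Set.indicator_of_notMem h2, sub_zero]
    · by_cases h2 : x ∈ dyadI (k+1) (2*n)
      · rw [haar_on_left h2, Set.indicator_of_mem h2, Set.indicator_of_notMem h1, zero_sub]
        push_cast
        rw [neg_smul]
      · have hx : x ∉ dyadI k n := by
          intro hx
          rw [← dyadI_union k n] at hx
          rcases hx with h | h
          · exact h2 h
          · exact h1 h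
        rw [haar_support hx, Set.indicator_of_notMem h1, Set.indicator_of_notMem h2,
          sub_zero]
        push_cast
        rw [zero_smul]
  rw [heq]
  have hmem : ∀ m : ℤ, MemLp ((dyadI (k+1) m).indicator
      (fun _ => ((Real.sqrt ((2:ℝ)^k) : ℝ) : ℂ) • u)) 2 volume := by
    intro m
    refine MeasureTheory.memLp_indicator_const 2 (measurableSet_dyadI (k+1) m) _ (Or.inr ?_)
    rw [volume_dyadI]
    exact ENNReal.ofReal_ne_top
  exact (hmem (2*n+1)).sub (hmem (2*n))

lemma master_ineq {W : ℝ → Mat d} {K : ℝ} (hW : IsA2Weight W K)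
    (σ : ℤ → ℤ → Mat d) (C₀ : ℝ) (hC₀ : 0 ≤ C₀)
    (hbdd : ∀ f Tf : ℝ → Vec d, Measurable f → MemLp f 2 volume → wNormSq W f < ⊤ →
      Measurable Tf →
      (∀ᵐ x ∂volume, HasSum (fun p : ℤ × ℤ =>
          ((haar p.1 p.2 x : ℝ) : ℂ) • ((σ p.1 p.2).mulVec (fhat f p.1 p.2))) (Tf x)) →
      (wNormSq W Tf) ^ ((1:ℝ)/2) ≤ ENNReal.ofReal C₀ * (wNormSq W f) ^ ((1:ℝ)/2))
    (k n : ℤ) (v : Vec d) :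
    qf (avgD W k n) ((σ k n).mulVec v) ≤ C₀ ^ 2 * qf (avgD W k n) v := by
  obtain ⟨h1, -, -, -, -, -, -, h8, -⟩ := hW
  set f : ℝ → Vec d := fun x => ((haar k n x : ℝ) : ℂ) • v with hf
  set Tf : ℝ → Vec d := fun x => ((haar k n x : ℝ) : ℂ) • ((σ k n).mulVec v) with hTf
  have hwf : wNormSq W f = ENNReal.ofReal (qf (avgD W k n) v) :=
    wNormSq_haar_smul h1 h1.2 k n v
  have hwTf : wNormSq W Tf = ENNReal.ofReal (qf (avgD W k n) ((σ k n).mulVec v)) :=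
    wNormSq_haar_smul h1 h1.2 k n _
  have hsum : ∀ᵐ x ∂volume, HasSum (fun p : ℤ × ℤ =>
      ((haar p.1 p.2 x : ℝ) : ℂ) • ((σ p.1 p.2).mulVec (fhat f p.1 p.2))) (Tf x) := by
    refine Filter.Eventually.of_forall fun x => ?_
    have hzero : ∀ p : ℤ × ℤ, p ≠ (k, n) →
        ((haar p.1 p.2 x : ℝ) : ℂ) • ((σ p.1 p.2).mulVec (fhat f p.1 p.2)) = 0 := by
      intro p hp
      have : fhat f p.1 p.2 = 0 := by
        rw [hf, fhat_haar_smul, if_neg]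
        intro ⟨hk, hn⟩
        exact hp (Prod.ext hk hn)
      rw [this, Matrix.mulVec_zero, smul_zero]
    have := hasSum_single (f := fun p : ℤ × ℤ =>
      ((haar p.1 p.2 x : ℝ) : ℂ) • ((σ p.1 p.2).mulVec (fhat f p.1 p.2))) (k, n) hzero
    have hfk : fhat f k n = v := by
      rw [hf, fhat_haar_smul, if_pos ⟨rfl, rfl⟩]
    have hterm : (fun p : ℤ × ℤ =>
        ((haar p.1 p.2 x : ℝ) : ℂ) • ((σ p.1 p.2).mulVec (fhat f p.1 p.2))) (k, n) = Tf x := by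
      show ((haar k n x : ℝ) : ℂ) • ((σ k n).mulVec (fhat f k n)) = Tf x
      rw [hfk]
    exact hterm ▸ this
  have hle := hbdd f Tf (measurable_haar_smul k n v) (memLp_haar_smul k n v)
    (by rw [hwf]; exact ENNReal.ofReal_lt_top) (measurable_haar_smul k n _) hsum
  rw [hwf, hwTf] at hle
  set A : ℝ := qf (avgD W k n) ((σ k n).mulVec v)
  set B : ℝ := qf (avgD W k n) v
  have hBnn : 0 ≤ B := qf_nonneg (h8 k n).posSemidef v
  have hsq := ENNReal.rpow_le_rpow hle (by norm_num : (0:ℝ) ≤ 2)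
  rw [← ENNReal.rpow_mul, ENNReal.mul_rpow_of_nonneg _ _ (by norm_num : (0:ℝ) ≤ 2),
    ← ENNReal.rpow_mul] at hsq
  norm_num at hsq
  rw [← ENNReal.ofReal_pow hC₀, ← ENNReal.ofReal_mul (by positivity : (0:ℝ) ≤ C₀ ^ 2)] at hsq
  exact (ENNReal.ofReal_le_ofReal_iff (by positivity)).mp hsq

end TestFunctions

lemma msqrt_spec {d : ℕ} {A : Mat d} (h : A.PosSemidef) :
    msqrt A * msqrt A = A ∧ (msqrt A)ᴴ = msqrt A := by
  rw [msqrt, dif_pos h]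
  set U : Mat d := (h.1.eigenvectorUnitary : Mat d) with hUdef
  have hU : star U * U = 1 := Unitary.coe_star_mul_self _
  set D : Mat d := diagonal ((↑) ∘ (h.1.eigenvalues · |>.sqrt)) with hD
  have hDD : D * D = diagonal (RCLike.ofReal ∘ h.1.eigenvalues) := by
    rw [hD, diagonal_mul_diagonal]; congr 1; funext i
    simp [← Complex.ofReal_mul, Real.mul_self_sqrt (h.eigenvalues_nonneg i)]
  have hDH : Dᴴ = D := by rw [hD, diagonal_conjTranspose]; congr 1; funext i; simp
  constructor
  · calc U * D * star U * (U * D * star U) = U * (D * (star U * U) * D) * star U := by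
          simp only [mul_assoc]
      _ = A := by
          rw [hU, mul_one, hDD]
          conv_rhs => rw [h.1.spectral_theorem]
          rw [Unitary.conjStarAlgAut_apply]
  · rw [conjTranspose_mul, conjTranspose_mul, hDH]
    simp [Matrix.star_eq_conjTranspose, mul_assoc]

/-- **Necessity of `‖σ‖_∞ < ∞` for boundedness of a Haar multiplier** (Theorem 5.2). -/
theorem haar_multiplier_necessity (d : ℕ) (W : ℝ → Mat d) (K : ℝ)
    (hW : IsA2Weight W K) (σ : ℤ → ℤ → Mat d) (C₀ : ℝ) (hC₀ : 0 ≤ C₀)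
    (hbdd : ∀ f Tf : ℝ → Vec d, Measurable f → MemLp f 2 volume → wNormSq W f < ⊤ →
      Measurable Tf →
      (∀ᵐ x ∂volume, HasSum (fun p : ℤ × ℤ =>
          ((haar p.1 p.2 x : ℝ) : ℂ) • ((σ p.1 p.2).mulVec (fhat f p.1 p.2))) (Tf x)) →
      (wNormSq W Tf) ^ ((1:ℝ)/2) ≤ ENNReal.ofReal C₀ * (wNormSq W f) ^ ((1:ℝ)/2)) :
    (∀ (k n : ℤ) (e : Vec d),
      qf ((msqrt (avgD W k n))⁻¹ * (σ k n)ᴴ * avgD W k n * σ k n *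
          (msqrt (avgD W k n))⁻¹) e ≤ C₀ ^ 2 * vnSq e) ∧
    (∀ k n : ℤ,
      mOpNorm (msqrt (avgD W k n) * σ k n * (msqrt (avgD W k n))⁻¹) ≤ C₀) := by
  have hmaster := master_ineq hW σ C₀ hC₀ hbdd
  have h8 : ∀ k n : ℤ, (avgD W k n).PosDef := hW.2.2.2.2.2.2.2.1
  have key : ∀ (k n : ℤ) (e : Vec d),
      qf ((msqrt (avgD W k n))⁻¹ * (σ k n)ᴴ * avgD W k n * σ k n *
          (msqrt (avgD W k n))⁻¹) e ≤ C₀ ^ 2 * vnSq e := by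
    intro k n e
    set A := avgD W k n with hA
    have hPD : A.PosDef := h8 k n
    have hPSD : A.PosSemidef := hPD.posSemidef
    have hmsq := msqrt_spec hPSD
    set S := msqrt A with hS
    have hSS : S * S = A := by exact hmsq.1
    have hSH : Sᴴ = S := by exact hmsq.2
    have hdet : IsUnit S.det := by
      have hAdet : A.det ≠ 0 := hPD.det_pos.ne'
      have hmul : S.det * S.det = A.det := by rw [← Matrix.det_mul, hSS]
      refine isUnit_iff_ne_zero.mpr fun h => hAdet ?_
      rw [← hmul, h, mul_zero]
    have hSinv : S * S⁻¹ = 1 := Matrix.mul_nonsing_inv _ hdet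
    have hSinvH : (S⁻¹)ᴴ = S⁻¹ := Matrix.IsHermitian.inv hSH
    have hM : S⁻¹ * (σ k n)ᴴ * A * σ k n * S⁻¹ =
        (σ k n * S⁻¹)ᴴ * A * (σ k n * S⁻¹) := by
      rw [Matrix.conjTranspose_mul, hSinvH]
      simp only [mul_assoc]
    rw [hM, qf_conj_mul, ← Matrix.mulVec_mulVec]
    refine le_trans (hmaster k n (S⁻¹.mulVec e)) ?_
    have hq : qf A (S⁻¹.mulVec e) = vnSq e := by
      have hA' : A = Sᴴ * S := by rw [hSH, hSS]
      rw [hA', qf_conjTranspose_mul_self, Matrix.mulVec_mulVec, hSinv, Matrix.one_mulVec]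
    rw [hq]
  refine ⟨key, fun k n => ?_⟩
  set A := avgD W k n with hA
  have hPD : A.PosDef := h8 k n
  have hPSD : A.PosSemidef := hPD.posSemidef
  have hmsq := msqrt_spec hPSD
  set S := msqrt A with hS
  have hSS : S * S = A := by exact hmsq.1
  have hSH : Sᴴ = S := by exact hmsq.2
  have hdet : IsUnit S.det := by
    have hAdet : A.det ≠ 0 := hPD.det_pos.ne'
    have hmul : S.det * S.det = A.det := by rw [← Matrix.det_mul, hSS]
    refine isUnit_iff_ne_zero.mpr fun h => hAdet ?_
    rw [← hmul, h, mul_zero]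
  have hSinvH : (S⁻¹)ᴴ = S⁻¹ := Matrix.IsHermitian.inv hSH
  set B2 := S * σ k n * S⁻¹ with hB2
  have hBB : B2ᴴ * B2 = S⁻¹ * (σ k n)ᴴ * A * σ k n * S⁻¹ := by
    rw [hB2, Matrix.conjTranspose_mul, Matrix.conjTranspose_mul, hSinvH, hSH]
    simp only [mul_assoc]
    rw [show S * (S * (σ k n * S⁻¹)) = A * (σ k n * S⁻¹) from by rw [← mul_assoc, hSS]]
  have key2 : ∀ u : Vec d, vnSq (B2.mulVec u) ≤ C₀ ^ 2 * vnSq u := by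
    intro u
    rw [← qf_conjTranspose_mul_self, hBB]
    exact key k n u
  rw [mOpNorm]
  refine ContinuousLinearMap.opNorm_le_bound _ hC₀ fun x => ?_
  set u : Vec d := (WithLp.equiv 2 (Fin d → ℂ)) x with hu
  have hx : x = (WithLp.equiv 2 (Fin d → ℂ)).symm u :=
    ((WithLp.equiv 2 (Fin d → ℂ)).symm_apply_apply x).symm
  rw [hx]
  change ‖(WithLp.equiv 2 (Fin d → ℂ)).symm (B2.mulVec u)‖ ≤ C₀ * ‖(WithLp.equiv 2 (Fin d → ℂ)).symm u‖
  have hnorm : ∀ w : Vec d, ‖(WithLp.equiv 2 (Fin d → ℂ)).symm w‖ = Real.sqrt (vnSq w) := by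
    intro w
    rw [EuclideanSpace.norm_eq]
    rfl
  rw [hnorm, hnorm]
  have hle : Real.sqrt (vnSq (B2.mulVec u)) ≤ Real.sqrt (C₀ ^ 2 * vnSq u) :=
    Real.sqrt_le_sqrt (key2 u)
  have heq : Real.sqrt (C₀ ^ 2 * vnSq u) = C₀ * Real.sqrt (vnSq u) := by
    rw [Real.sqrt_mul (sq_nonneg C₀), Real.sqrt_sq hC₀]
  linarith

end
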